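/- Let k be an algebraically closed field of characteristic p > 2, g = sl_2(k), χ the regular nilpotent character (χ(H^p−H)=0, χ(E^p)=0, χ(F^p)=1), and V = V_{χ,0} the p-dimensional simple module with basis v_0, …, v_{p−1} on which H·v_i = −2i·v_i, F·v_i = v_{i+1} (indices mod p), E·v_i = i(1−i)·v_{i−1}. Then V is not ambidextrous: there exists a g-module endomorphism f of V ⊗ V which maps the symmetric part S²V into the exterior part Λ²V and satisfies tr_R(f) = −id_V ≠ 0, while tr_R(f) = −tr_L(f); hence the canonical trace on End(V) fails to be ambidextrous. -/

import Mathlib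

open TensorProduct

/-- The right partial trace of `f : V ⊗ V → V ⊗ V`, computed with respect to the
basis `b`:  `tr_R(f)(v) = ∑ i (id ⊗ b.coord i)(f(v ⊗ b i))`. -/
noncomputable def ptrR {k : Type*} [Field k] {V : Type*} [AddCommGroup V] [Module k V]
    {ι : Type*} [Fintype ι] (b : Module.Basis ι k V)
    (f : V ⊗[k] V →ₗ[k] V ⊗[k] V) : V →ₗ[k] V :=
  ∑ i : ι, (TensorProduct.rid k V).toLinearMap
      ∘ₗ (TensorProduct.map LinearMap.id (b.coord i))
      ∘ₗ f ∘ₗ ((TensorProduct.mk k V V).flip (b i))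

/-- The left partial trace of `f : V ⊗ V → V ⊗ V`, computed with respect to the
basis `b`:  `tr_L(f)(v) = ∑ i (b.coord i ⊗ id)(f(b i ⊗ v))`. -/
noncomputable def ptrL {k : Type*} [Field k] {V : Type*} [AddCommGroup V] [Module k V]
    {ι : Type*} [Fintype ι] (b : Module.Basis ι k V)
    (f : V ⊗[k] V →ₗ[k] V ⊗[k] V) : V →ₗ[k] V :=
  ∑ i : ι, (TensorProduct.lid k V).toLinearMap
      ∘ₗ (TensorProduct.map (b.coord i) LinearMap.id)
      ∘ₗ f ∘ₗ (TensorProduct.mk k V V (b i))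

/-- The action of `H` on the baby Verma module `V_{χ,0}`: `H⬝vᵢ = -2i⬝vᵢ`. -/
noncomputable def Hact (p : ℕ) (k : Type*) [Field k] : (Fin p → k) →ₗ[k] (Fin p → k) :=
  Matrix.toLin' (Matrix.diagonal fun i : Fin p => (-2 : k) * ((i : ℕ) : k))

/-- The action of `F` on `V_{χ,0}`: `F⬝vᵢ = v_{i+1}` (indices mod `p`). -/
noncomputable def Fact' (p : ℕ) [NeZero p] (k : Type*) [Field k] :
    (Fin p → k) →ₗ[k] (Fin p → k) :=
  Matrix.toLin' (fun j i : Fin p => if j = i + 1 then (1 : k) else 0)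

/-- The action of `E` on `V_{χ,0}`: `E⬝vᵢ = i(1-i)⬝v_{i-1}` (indices mod `p`). -/
noncomputable def Eact (p : ℕ) [NeZero p] (k : Type*) [Field k] :
    (Fin p → k) →ₗ[k] (Fin p → k) :=
  Matrix.toLin' (fun j i : Fin p =>
    if j + 1 = i then ((i : ℕ) : k) * (1 - ((i : ℕ) : k)) else 0)

/-- The action of an element acting by `X` on the tensor square, via the
coproduct: `X ⊗ 1 + 1 ⊗ X`. -/
noncomputable def tAct {p : ℕ} {k : Type*} [Field k]
    (X : (Fin p → k) →ₗ[k] (Fin p → k)) :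
    (Fin p → k) ⊗[k] (Fin p → k) →ₗ[k] (Fin p → k) ⊗[k] (Fin p → k) :=
  TensorProduct.map X LinearMap.id + TensorProduct.map LinearMap.id X

set_option linter.unusedSectionVars false
set_option maxHeartbeats 1000000
set_option synthInstance.maxHeartbeats 100000

namespace Stmt19

open Fin.CommRing

/-! coefficient functions -/

variable {p : ℕ} [NeZero p] {k : Type*} [Field k]

noncomputable def mu (k : Type*) [Field k] {p : ℕ} (i j : Fin p) : k :=
  if i.val = 0 ∨ j.val = 0 then 1
  else (-1) ^ (j.val + 1) * (((i.val - 1).choose (p - j.val) : ℕ) : k)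

noncomputable def nu (k : Type*) [Field k] {p : ℕ} (s a : Fin p) : k :=
  if s.val = 0 then (if a.val = 0 then 0 else 2 * (-1) ^ a.val)
  else (((s.val - 1).choose a.val : ℕ) : k) -
    (if a.val = 0 then 0 else (((s.val - 1).choose (a.val - 1) : ℕ) : k))

noncomputable def cc (k : Type*) [Field k] {p : ℕ} [NeZero p] (s : Fin p) : k := if s = 0 then 2 else 1
noncomputable def eps (k : Type*) [Field k] {p : ℕ} (s : Fin p) : k := -((s.val : k) - 1) * (s.val : k)

/-! cast lemmas -/

section cast
variable [CharP k p]

lemma cast_mod (n : ℕ) : ((n % p : ℕ) : k) = (n : k) := by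
  conv_rhs => rw [← Nat.mod_add_div n p]
  push_cast [CharP.cast_eq_zero k p]
  ring

lemma val_add_cast (x y : Fin p) : (((x + y : Fin p) : ℕ) : k) = (x : ℕ) + (y : ℕ) := by
  rw [Fin.val_add, cast_mod, Nat.cast_add]

lemma val_sub_cast (x y : Fin p) : (((x - y : Fin p) : ℕ) : k) = ((x : ℕ) : k) - (y : ℕ) := by
  rw [Fin.sub_def]
  show (((p - y.val + x.val) % p : ℕ) : k) = _
  rw [cast_mod, Nat.cast_add, Nat.cast_sub (le_of_lt y.isLt), CharP.cast_eq_zero k p]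
  ring

lemma val_one_cast (hp2 : 2 < p) : (((1 : Fin p) : ℕ) : k) = 1 := by
  rw [Fin.val_one']
  rw [Nat.mod_eq_of_lt (by omega)]
  exact Nat.cast_one

end cast

/-! the basis vectors and actions -/

noncomputable def ee (k : Type*) [Field k] {p : ℕ} (i : Fin p) : Fin p → k := Pi.single i 1

lemma basisFun_eq_ee (i : Fin p) : (Pi.basisFun k (Fin p)) i = ee k i := by
  ext j; simp [Pi.basisFun_apply, ee]

lemma toLin'_single (M : Matrix (Fin p) (Fin p) k) (i : Fin p) :
    Matrix.toLin' M (ee k i) = fun j => M j i := by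
  ext j
  simp [ee, Matrix.toLin'_apply, Matrix.mulVec_single]

lemma Hact_ee (i : Fin p) : Hact p k (ee k i) = ((-2 : k) * (i : ℕ)) • ee k i := by
  rw [Hact, toLin'_single]
  ext j
  by_cases h : j = i <;> simp [Matrix.diagonal, ee, Pi.single_apply, h]

lemma Fact'_ee (i : Fin p) : Fact' p k (ee k i) = ee k (i + 1) := by
  rw [Fact']; erw [toLin'_single]
  ext j
  simp [ee, Pi.single_apply]

lemma Eact_ee (i : Fin p) : Eact p k (ee k i) = (((i : ℕ) : k) * (1 - (i : ℕ))) • ee k (i - 1) := by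
  rw [Eact]; erw [toLin'_single]
  ext j
  have : (j + 1 = i) ↔ (j = i - 1) := by constructor <;> (intro h; subst h; ring)
  by_cases h : j = i - 1 <;> simp [ee, Pi.single_apply, this, h]


set_option linter.unusedSectionVars false




section bin
variable [CharP k p] (hp : p.Prime)
include hp

lemma cast_choose_p (m : ℕ) (h0 : 0 < m) (h1 : m < p) : ((p.choose m : ℕ) : k) = 0 := by
  have := Nat.Prime.dvd_choose_self hp (by omega) h1
  exact_mod_cast (CharP.cast_eq_zero_iff k p _).2 this

lemma cast_choose_p1 (m : ℕ) (hm : m ≤ p - 1) : (((p - 1).choose m : ℕ) : k) = (-1 : k) ^ m := by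
  induction m with
  | zero => simp
  | succ n ih =>
    have hn : n ≤ p - 1 := by omega
    have hpos : 0 < p := Nat.pos_of_ne_zero (NeZero.ne p)
    have pas : p.choose (n + 1) = (p - 1).choose n + (p - 1).choose (n + 1) := by
      conv_lhs => rw [show p = (p - 1) + 1 by omega]
      exact Nat.choose_succ_succ (p - 1) n
    have h0 : ((p.choose (n + 1) : ℕ) : k) = 0 := cast_choose_p hp (n + 1) (by omega) (by omega)
    rw [pas] at h0
    push_cast at h0
    rw [ih hn] at h0
    have : (((p - 1).choose (n + 1) : ℕ) : k) = -(-1 : k) ^ n := by linear_combination h0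
    rw [this]; ring

lemma cast_choose_p2 (m : ℕ) (hm : m ≤ p - 2) (hp2 : 2 < p) :
    (((p - 2).choose m : ℕ) : k) = (-1 : k) ^ m * ((m : k) + 1) := by
  induction m with
  | zero => simp
  | succ n ih =>
    have hn : n ≤ p - 2 := by omega
    have pas : (p - 1).choose (n + 1) = (p - 2).choose n + (p - 2).choose (n + 1) := by
      conv_lhs => rw [show p - 1 = (p - 2) + 1 by omega]
      exact Nat.choose_succ_succ (p - 2) n
    have h1 : (((p - 1).choose (n + 1) : ℕ) : k) = (-1 : k) ^ (n + 1) :=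
      cast_choose_p1 hp (n + 1) (by omega)
    rw [pas] at h1
    push_cast at h1
    rw [ih hn] at h1
    have : (((p - 2).choose (n + 1) : ℕ) : k) = (-1:k)^(n+1) - (-1:k)^n * ((n:k)+1) := by
      linear_combination h1
    rw [this]; push_cast; ring

end bin

section finval
variable (hp2 : 2 < p)
include hp2

lemma val_add_one (a : Fin p) : ((a + 1 : Fin p) : ℕ) = if a.val = p - 1 then 0 else a.val + 1 := by
  rw [Fin.val_add, Fin.val_one', Nat.mod_eq_of_lt (show 1 < p by omega)]
  split
  · next h => rw [h, Nat.sub_add_cancel (by omega), Nat.mod_self]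
  · next h => exact Nat.mod_eq_of_lt (by have := a.isLt; omega)

lemma val_sub_one (a : Fin p) : ((a - 1 : Fin p) : ℕ) = if a.val = 0 then p - 1 else a.val - 1 := by
  have h1 : ((1 : Fin p) : ℕ) = 1 := by rw [Fin.val_one']; exact Nat.mod_eq_of_lt (by omega)
  rw [Fin.sub_def]
  show (p - ((1 : Fin p) : ℕ) + a.val) % p = _
  rw [h1]
  split
  · next h => rw [h, Nat.add_zero]; exact Nat.mod_eq_of_lt (by omega)
  · next h =>
    have : p - 1 + a.val = p + (a.val - 1) := by omega
    rw [this, Nat.add_mod_left]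
    exact Nat.mod_eq_of_lt (by have := a.isLt; omega)

lemma val_add (a b : Fin p) :
    ((a + b : Fin p) : ℕ) = if a.val + b.val < p then a.val + b.val else a.val + b.val - p := by
  rw [Fin.val_add]
  split
  · next h => exact Nat.mod_eq_of_lt h
  · next h =>
    have h2 : a.val + b.val - p < p := by have := a.isLt; have := b.isLt; omega
    conv_lhs => rw [show a.val + b.val = p + (a.val + b.val - p) by omega, Nat.add_mod_left]
    exact Nat.mod_eq_of_lt h2

lemma val_sub (a b : Fin p) :
    ((a - b : Fin p) : ℕ) = if b.val ≤ a.val then a.val - b.val else p + a.val - b.val := by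
  rw [Fin.sub_def]
  show (p - b.val + a.val) % p = _
  have hb := b.isLt; have ha := a.isLt
  split
  · next h =>
    have : p - b.val + a.val = p + (a.val - b.val) := by omega
    rw [this, Nat.add_mod_left]
    exact Nat.mod_eq_of_lt (by omega)
  · next h =>
    have : p - b.val + a.val = p + a.val - b.val := by omega
    rw [this]
    exact Nat.mod_eq_of_lt (by omega)

end finval

section nulemmas
variable [CharP k p] (hp : p.Prime) (hp2 : 2 < p)
include hp hp2

lemma cast_psub (m : ℕ) (h : m ≤ p) : ((p - m : ℕ) : k) = -(m : k) := by
  rw [Nat.cast_sub h, CharP.cast_eq_zero]; ring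

lemma neg_pow_even_shift (m : ℕ) : ((-1 : k)) ^ (m + 2) = (-1) ^ m := by
  rw [pow_add]; norm_num

lemma neg_pow_p_sub_one : ((-1 : k)) ^ (p - 1) = 1 := by
  have hodd : Odd p := hp.odd_of_ne_two (by omega)
  have : Even (p - 1) := Nat.Odd.sub_odd hodd odd_one
  exact this.neg_one_pow

lemma cc_eq (s : Fin p) : (cc k s : k) = if s.val = 0 then 2 else 1 := by
  rw [cc]
  congr 1
  simp only [Fin.ext_iff, Fin.val_zero]

lemma nuF (s a : Fin p) : nu k s (a - 1) + nu k s a = cc k s * nu k (s + 1) a := by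
  have hs := s.isLt; have ha := a.isLt
  simp only [nu, cc_eq hp hp2, val_sub_one hp2, val_add_one hp2]
  by_cases hs0 : s.val = 0
  · have hsl : ¬ (s.val = p - 1) := by omega
    simp only [if_pos hs0, if_neg hsl]
    rw [if_neg (show ¬ (s.val + 1 = 0) by omega)]
    by_cases ha0 : a.val = 0
    · simp only [if_pos ha0]
      rw [if_neg (show ¬ (p - 1 = 0) by omega)]
      rw [neg_pow_p_sub_one hp hp2, show s.val + 1 - 1 = s.val from rfl, hs0, ha0]
      norm_num
    · simp only [if_neg ha0]
      rw [show s.val + 1 - 1 = s.val from rfl, hs0]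
      by_cases ha1 : a.val = 1
      · rw [if_pos (show a.val - 1 = 0 by omega), ha1]
        norm_num
      · rw [if_neg (show ¬ (a.val - 1 = 0) by omega)]
        obtain ⟨m, hm⟩ : ∃ m, a.val = m + 2 := ⟨a.val - 2, by omega⟩
        rw [hm]
        rw [Nat.choose_eq_zero_of_lt (show 0 < m + 2 by omega),
            Nat.choose_eq_zero_of_lt (show 0 < m + 2 - 1 by omega)]
        rw [show m + 2 - 1 = m + 1 from rfl, pow_succ, pow_succ]
        push_cast; ring
  · simp only [if_neg hs0]
    by_cases hsl : s.val = p - 1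
    · simp only [if_pos hsl, if_true, one_mul, hsl, show p - 1 - 1 = p - 2 by omega]
      by_cases ha0 : a.val = 0
      · simp only [if_pos ha0, if_pos rfl]
        rw [if_neg (show ¬ (p - 1 = 0) by omega)]
        rw [Nat.choose_eq_zero_of_lt (show p - 2 < p - 1 by omega),
            show p - 1 - 1 = p - 2 by omega, Nat.choose_self, ha0, Nat.choose_zero_right]
        norm_num
      · simp only [if_neg ha0]
        by_cases ha1 : a.val = 1
        · rw [if_pos (show a.val - 1 = 0 by omega), ha1]
          rw [Nat.choose_one_right, Nat.choose_zero_right]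
          rw [cast_psub hp hp2 2 (by omega)]
          norm_num
        · rw [if_neg (show ¬ (a.val - 1 = 0) by omega)]
          obtain ⟨m, hm⟩ : ∃ m, a.val = m + 2 := ⟨a.val - 2, by omega⟩
          rw [hm, show m + 2 - 1 = m + 1 from rfl, show m + 1 - 1 = m from rfl]
          by_cases hmt : m + 2 ≤ p - 2
          · rw [cast_choose_p2 hp (m+2) (by omega) hp2, cast_choose_p2 hp (m+1) (by omega) hp2,
                cast_choose_p2 hp m (by omega) hp2]
            push_cast
            rw [neg_pow_even_shift hp hp2]
            ring
          · have hm2 : m + 2 = p - 1 := by omega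
            rw [Nat.choose_eq_zero_of_lt (show p - 2 < m + 2 by omega),
                cast_choose_p2 hp (m+1) (by omega) hp2, cast_choose_p2 hp m (by omega) hp2]
            have h3 : ((m : k) + 3) = 0 := by
              have h4 : ((m + 3 : ℕ) : k) = ((p : ℕ) : k) := by rw [show m + 3 = p by omega]
              rw [CharP.cast_eq_zero k p] at h4
              push_cast at h4
              linear_combination h4
            push_cast
            rw [neg_pow_even_shift hp hp2]
            linear_combination (-(-1:k)^m) * h3
    · simp only [if_neg hsl]
      rw [if_neg (show ¬ (s.val + 1 = 0) by omega),
          show s.val + 1 - 1 = s.val from rfl]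
      by_cases ha0 : a.val = 0
      · simp only [if_pos ha0]
        rw [if_neg (show ¬ (p - 1 = 0) by omega)]
        rw [Nat.choose_eq_zero_of_lt (show s.val - 1 < p - 1 by omega),
            Nat.choose_eq_zero_of_lt (show s.val - 1 < p - 1 - 1 by omega)]
        simp [ha0]
      · simp only [if_neg ha0]
        by_cases ha1 : a.val = 1
        · rw [if_pos (show a.val - 1 = 0 by omega), ha1]
          rw [Nat.choose_one_right, Nat.choose_one_right, Nat.choose_zero_right,
              Nat.choose_zero_right]
          rw [Nat.cast_sub (show 1 ≤ s.val by omega)]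
          push_cast; ring
        · rw [if_neg (show ¬ (a.val - 1 = 0) by omega)]
          obtain ⟨m, hm⟩ : ∃ m, a.val = m + 2 := ⟨a.val - 2, by omega⟩
          obtain ⟨n, hn⟩ : ∃ n, s.val = n + 1 := ⟨s.val - 1, by omega⟩
          rw [hm, hn]
          simp only [show n + 1 - 1 = n from rfl, show m + 2 - 1 = m + 1 from rfl,
            show m + 1 - 1 = m from rfl, show n + 1 + 1 - 1 = n + 1 from rfl]
          rw [Nat.choose_succ_succ n (m+1), Nat.choose_succ_succ n m]
          push_cast; ring

end nulemmas
section nulemmas2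
variable [CharP k p] (hp : p.Prime) (hp2 : 2 < p)
include hp hp2

lemma nuAnti (s a : Fin p) : nu k s (s - a) = - nu k s a := by
  have hs := s.isLt; have ha := a.isLt
  simp only [nu, val_sub hp2]
  by_cases hs0 : s.val = 0
  · simp only [if_pos hs0]
    by_cases ha0 : a.val = 0
    · rw [if_pos (show a.val ≤ s.val by omega)]
      rw [if_pos (show s.val - a.val = 0 by omega), if_pos ha0]
      norm_num
    · rw [if_neg (show ¬ a.val ≤ s.val by omega)]
      rw [if_neg (show ¬ (p + s.val - a.val = 0) by omega), if_neg ha0]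
      have h1 : (-1:k) ^ (p + s.val - a.val) * (-1) ^ a.val = -1 := by
        rw [← pow_add, show p + s.val - a.val + a.val = p by omega]
        exact (hp.odd_of_ne_two (by omega)).neg_one_pow
      have h2 : (-1:k) ^ a.val * (-1) ^ a.val = 1 := by
        rw [← pow_add, ← two_mul, pow_mul]; norm_num
      have hx : (-1:k) ^ (p + s.val - a.val) = -(-1:k) ^ a.val := by
        calc (-1:k) ^ (p + s.val - a.val)
            = (-1) ^ (p + s.val - a.val) * ((-1) ^ a.val * (-1) ^ a.val) := by rw [h2, mul_one]
          _ = ((-1) ^ (p + s.val - a.val) * (-1) ^ a.val) * (-1) ^ a.val := by ring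
          _ = -(-1) ^ a.val := by rw [h1]; ring
      rw [hx]; ring
  · simp only [if_neg hs0]
    by_cases ha0 : a.val = 0
    · rw [if_pos (show a.val ≤ s.val by omega)]
      rw [if_neg (show ¬ (s.val - a.val = 0) by omega), if_pos ha0]
      rw [show s.val - a.val = s.val by omega,
          Nat.choose_eq_zero_of_lt (show s.val - 1 < s.val by omega),
          Nat.choose_self, ha0, Nat.choose_zero_right]
      norm_num
    · by_cases hle : a.val ≤ s.val
      · rw [if_pos hle]
        by_cases heq : s.val - a.val = 0
        · rw [if_pos heq, if_neg ha0]
          rw [show a.val = s.val by omega,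
              Nat.choose_eq_zero_of_lt (show s.val - 1 < s.val by omega),
              Nat.choose_self]
          norm_num
        · rw [if_neg heq, if_neg ha0]
          rw [show s.val - a.val = (s.val - 1) - (a.val - 1) by omega]
          rw [Nat.choose_symm (show a.val - 1 ≤ s.val - 1 by omega)]
          rw [show (s.val - 1) - (a.val - 1) - 1 = (s.val - 1) - a.val by omega]
          rw [Nat.choose_symm (show a.val ≤ s.val - 1 by omega)]
          ring
      · rw [if_neg hle]
        rw [if_neg (show ¬ (p + s.val - a.val = 0) by omega), if_neg ha0]
        rw [Nat.choose_eq_zero_of_lt (show s.val - 1 < p + s.val - a.val by omega),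
            Nat.choose_eq_zero_of_lt (show s.val - 1 < p + s.val - a.val - 1 by omega),
            Nat.choose_eq_zero_of_lt (show s.val - 1 < a.val by omega),
            Nat.choose_eq_zero_of_lt (show s.val - 1 < a.val - 1 by omega)]
        norm_num

end nulemmas2
section nulemmas3
variable [CharP k p] (hp : p.Prime) (hp2 : 2 < p)
include hp hp2

lemma nuE (s a : Fin p) :
    -((a.val : k) + 1) * (a.val : k) * nu k s (a + 1) +
      ((s.val : k) - (a.val : k)) * (1 + (a.val : k) - (s.val : k)) * nu k s a
    = eps k s * nu k (s - 1) a := by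
  have hs := s.isLt; have ha := a.isLt
  simp only [nu, eps, val_add_one hp2, val_sub_one hp2]
  by_cases hs0 : s.val = 0
  · -- eps = 0, LHS = 0
    simp only [if_pos hs0]
    rw [hs0]
    by_cases ha0 : a.val = 0
    · rw [if_neg (show ¬ (a.val = p - 1) by omega)]
      rw [if_neg (show ¬ (a.val + 1 = 0) by omega), if_pos ha0, ha0]
      push_cast; ring
    · by_cases hap : a.val = p - 1
      · rw [if_pos hap, if_pos rfl, if_neg ha0]
        have hA : (a.val : k) = -1 := by
          rw [hap, cast_psub hp hp2 1 (by omega)]; norm_num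
        rw [hA]; push_cast; ring
      · rw [if_neg hap, if_neg (show ¬ (a.val + 1 = 0) by omega), if_neg ha0]
        rw [pow_succ]
        push_cast; ring
  · simp only [if_neg hs0]
    by_cases hs1 : s.val = 1
    · -- eps = 0 again; all LHS terms vanish
      by_cases ha0 : a.val = 0
      · rw [if_pos ha0, ha0, hs1]
        push_cast; ring
      · rw [if_neg ha0]
        by_cases ha1 : a.val = 1
        · -- term2 coeff (s-a)=0 ; term1: nu k s (a+1) = C(0,2)-C(0,1) = 0
          rw [if_neg (show ¬ (a.val = p - 1) by omega),
              if_neg (show ¬ (a.val + 1 = 0) by omega)]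
          rw [ha1, hs1]
          norm_num
        · -- a ≥ 2 : nu(1,a)=0, nu(1,a+1)=0 (or a = p-1 wrap)
          by_cases hap : a.val = p - 1
          · rw [if_pos hap, if_pos rfl]
            have hA : (a.val : k) = -1 := by
              rw [hap, cast_psub hp hp2 1 (by omega)]; norm_num
            rw [hs1, hA]
            rw [Nat.choose_eq_zero_of_lt (show 1 - 1 < a.val by omega),
                Nat.choose_eq_zero_of_lt (show 1 - 1 < a.val - 1 by omega)]
            push_cast; ring
          · rw [if_neg hap, if_neg (show ¬ (a.val + 1 = 0) by omega)]
            rw [hs1]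
            rw [show a.val + 1 - 1 = a.val from rfl]
            rw [Nat.choose_eq_zero_of_lt (show 1 - 1 < a.val + 1 by omega),
                Nat.choose_eq_zero_of_lt (show 1 - 1 < a.val by omega),
                Nat.choose_eq_zero_of_lt (show 1 - 1 < a.val - 1 by omega)]
            push_cast; ring
    · -- s ≥ 2
      rw [if_neg (show ¬ (s.val - 1 = 0) by omega)]
      rw [show s.val - 1 - 1 = s.val - 2 by omega]
      by_cases ha0 : a.val = 0
      · rw [if_pos ha0, if_pos ha0, ha0]
        rw [Nat.choose_zero_right, Nat.choose_zero_right]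
        push_cast; ring
      · rw [if_neg ha0, if_neg ha0]
        by_cases hlt : a.val < s.val
        · -- main case 1 ≤ a ≤ s-1
          rw [if_neg (show ¬ (a.val = p - 1) by omega),
              if_neg (show ¬ (a.val + 1 = 0) by omega)]
          rw [show a.val + 1 - 1 = a.val from rfl]
          have c1 : ((s.val - 1 : ℕ) : k) = (s.val : k) - 1 := by
            rw [Nat.cast_sub (by omega)]; norm_num
          have c2 : ((s.val - 1 - a.val : ℕ) : k) = (s.val : k) - 1 - a.val := by
            rw [Nat.cast_sub (by omega), c1]
          have c3 : ((s.val - a.val : ℕ) : k) = (s.val : k) - a.val := by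
            rw [Nat.cast_sub (by omega)]
          have hA : (((s.val - 1).choose (a.val + 1) : ℕ) : k) * ((a.val : k) + 1)
              = ((s.val - 1).choose a.val : ℕ) * ((s.val : k) - 1 - (a.val : k)) := by
            have := Nat.choose_succ_right_eq (s.val - 1) a.val
            calc (((s.val - 1).choose (a.val + 1) : ℕ) : k) * ((a.val : k) + 1)
                = (((s.val - 1).choose (a.val + 1) * (a.val + 1) : ℕ) : k) := by push_cast; ring
              _ = (((s.val - 1).choose a.val * (s.val - 1 - a.val) : ℕ) : k) := by rw [this]
              _ = _ := by push_cast [c2]; ring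
          have hB : (((s.val - 1).choose a.val : ℕ) : k) * (a.val : k)
              = ((s.val - 1).choose (a.val - 1) : ℕ) * ((s.val : k) - (a.val : k)) := by
            have h := Nat.choose_succ_right_eq (s.val - 1) (a.val - 1)
            rw [show a.val - 1 + 1 = a.val by omega] at h
            rw [show s.val - 1 - (a.val - 1) = s.val - a.val by omega] at h
            calc (((s.val - 1).choose a.val : ℕ) : k) * (a.val : k)
                = (((s.val - 1).choose a.val * a.val : ℕ) : k) := by push_cast; ring
              _ = (((s.val - 1).choose (a.val - 1) * (s.val - a.val) : ℕ) : k) := by rw [h]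
              _ = _ := by push_cast [c3]; ring
          have hC : (((s.val - 2).choose a.val : ℕ) : k) * ((s.val : k) - 1)
              = ((s.val - 1).choose a.val : ℕ) * ((s.val : k) - 1 - (a.val : k)) := by
            have h := Nat.choose_mul_succ_eq (s.val - 2) a.val
            rw [show s.val - 2 + 1 = s.val - 1 by omega] at h
            calc (((s.val - 2).choose a.val : ℕ) : k) * ((s.val : k) - 1)
                = (((s.val - 2).choose a.val * (s.val - 1) : ℕ) : k) := by push_cast [c1]; ring
              _ = (((s.val - 1).choose a.val * (s.val - 1 - a.val) : ℕ) : k) := by rw [h]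
              _ = _ := by push_cast [c2]; ring
          have hD : (((s.val - 2).choose (a.val - 1) : ℕ) : k) * ((s.val : k) - 1)
              = ((s.val - 1).choose (a.val - 1) : ℕ) * ((s.val : k) - (a.val : k)) := by
            have h := Nat.choose_mul_succ_eq (s.val - 2) (a.val - 1)
            rw [show s.val - 2 + 1 = s.val - 1 by omega] at h
            rw [show s.val - 1 - (a.val - 1) = s.val - a.val by omega] at h
            calc (((s.val - 2).choose (a.val - 1) : ℕ) : k) * ((s.val : k) - 1)
                = (((s.val - 2).choose (a.val - 1) * (s.val - 1) : ℕ) : k) := by push_cast [c1]; ring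
              _ = (((s.val - 1).choose (a.val - 1) * (s.val - a.val) : ℕ) : k) := by rw [h]
              _ = _ := by push_cast [c3]; ring
          linear_combination (-(a.val : k)) * hA + (1 + (a.val : k)) * hB
            + (s.val : k) * hC + (-(s.val : k)) * hD
        · -- a ≥ s
          by_cases heq : a.val = s.val
          · -- a = s
            have hzero : (((s.val - 2).choose a.val : ℕ) : k) = 0 := by
              rw [Nat.choose_eq_zero_of_lt (by omega)]; norm_num
            have hzero2 : (((s.val - 2).choose (a.val - 1) : ℕ) : k) = 0 := by
              rw [Nat.choose_eq_zero_of_lt (by omega)]; norm_num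
            rw [hzero, hzero2]
            have hSA : (a.val : k) = (s.val : k) := by rw [heq]
            by_cases hap : a.val = p - 1
            · rw [if_pos hap, if_pos rfl]
              have hA1 : (a.val : k) = -1 := by
                rw [hap, cast_psub hp hp2 1 (by omega)]; norm_num
              rw [hSA] at hA1
              rw [hSA, hA1]; push_cast; ring
            · rw [if_neg hap, if_neg (show ¬ (a.val + 1 = 0) by omega)]
              rw [show a.val + 1 - 1 = a.val from rfl]
              rw [Nat.choose_eq_zero_of_lt (show s.val - 1 < a.val + 1 by omega),
                  Nat.choose_eq_zero_of_lt (show s.val - 1 < a.val by omega)]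
              rw [hSA]; push_cast; ring
          · -- a > s
            have h1 : (((s.val - 1).choose a.val : ℕ) : k) = 0 := by
              rw [Nat.choose_eq_zero_of_lt (by omega)]; norm_num
            have h2 : (((s.val - 1).choose (a.val - 1) : ℕ) : k) = 0 := by
              rw [Nat.choose_eq_zero_of_lt (by omega)]; norm_num
            have h3 : (((s.val - 2).choose a.val : ℕ) : k) = 0 := by
              rw [Nat.choose_eq_zero_of_lt (by omega)]; norm_num
            have h4 : (((s.val - 2).choose (a.val - 1) : ℕ) : k) = 0 := by
              rw [Nat.choose_eq_zero_of_lt (by omega)]; norm_num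
            rw [h1, h2, h3, h4]
            by_cases hap : a.val = p - 1
            · rw [if_pos hap, if_pos rfl]
              have hA1 : (a.val : k) = -1 := by
                rw [hap, cast_psub hp hp2 1 (by omega)]; norm_num
              rw [hA1]; push_cast; ring
            · rw [if_neg hap, if_neg (show ¬ (a.val + 1 = 0) by omega)]
              rw [show a.val + 1 - 1 = a.val from rfl]
              have h5 : (((s.val - 1).choose (a.val + 1) : ℕ) : k) = 0 := by
                rw [Nat.choose_eq_zero_of_lt (by omega)]; norm_num
              rw [h5, h1]
              ring
end nulemmas3
section mulemmas
variable [CharP k p] (hp : p.Prime) (hp2 : 2 < p)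
include hp hp2

lemma muF (i j : Fin p) :
    mu k (i + 1) j + mu k i (j + 1) = cc k (i + j) * mu k i j := by
  have hi := i.isLt; have hj := j.isLt
  simp only [mu, cc_eq hp hp2, val_add_one hp2, val_add hp2]
  by_cases hi0 : i.val = 0
  · rw [if_neg (show ¬ (i.val = p - 1) by omega)]
    by_cases hj0 : j.val = 0
    · rw [if_pos (Or.inr hj0), if_pos (Or.inl hi0), if_pos (Or.inl hi0),
          if_pos (show i.val + j.val < p by omega), if_pos (show i.val + j.val = 0 by omega)]
      norm_num
    · rw [if_neg (not_or.mpr ⟨by omega, hj0⟩), if_pos (Or.inl hi0), if_pos (Or.inl hi0),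
          if_pos (show i.val + j.val < p by omega), if_neg (show ¬ (i.val + j.val = 0) by omega)]
      rw [show i.val + 1 - 1 = i.val from rfl, hi0,
          Nat.choose_eq_zero_of_lt (show 0 < p - j.val by omega)]
      norm_num
  · by_cases hj0 : j.val = 0
    · -- j = 0, i ≥ 1
      rw [if_pos (Or.inr hj0), if_pos (Or.inr hj0)]
      have h2 : ¬ (j.val = p - 1) := by omega
      rw [if_neg h2]
      rw [if_neg (not_or.mpr ⟨hi0, by omega⟩)]
      rw [if_pos (show i.val + j.val < p by omega),
          if_neg (show ¬ (i.val + j.val = 0) by omega)]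
      rw [show p - (j.val + 1) = p - 1 by omega,
          Nat.choose_eq_zero_of_lt (show i.val - 1 < p - 1 by omega)]
      norm_num
    · -- i,j ≥ 1
      by_cases hip : i.val = p - 1
      · rw [if_pos hip, if_pos (Or.inl rfl)]
        have hipj : ¬ (i.val + j.val < p) := by omega
        rw [if_neg hipj]
        by_cases hjp : j.val = p - 1
        · rw [if_pos hjp, if_pos (Or.inr rfl),
              if_neg (not_or.mpr ⟨hi0, hj0⟩),
              if_neg (show ¬ (i.val + j.val - p = 0) by omega)]
          rw [show p - j.val = 1 by omega, Nat.choose_one_right,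
              show j.val + 1 = p by omega,
              (hp.odd_of_ne_two (by omega)).neg_one_pow,
              hip, show p - 1 - 1 = p - 2 by omega,
              cast_psub hp hp2 2 (by omega)]
          norm_num
        · rw [if_neg hjp, if_neg (not_or.mpr ⟨hi0, (show ¬ (j.val + 1 = 0) by omega)⟩),
              if_neg (not_or.mpr ⟨hi0, hj0⟩)]
          rw [show p - (j.val + 1) = p - j.val - 1 by omega,
              hip, show p - 1 - 1 = p - 2 by omega]
          rw [cast_choose_p2 hp (p - j.val - 1) (by omega) hp2]
          have e1 : (-1:k) ^ (j.val + 1 + 1) * (-1) ^ (p - j.val - 1) = 1 := by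
            rw [← pow_add, show j.val + 1 + 1 + (p - j.val - 1) = p + 1 by omega, pow_succ,
                (hp.odd_of_ne_two (by omega)).neg_one_pow]
            norm_num
          have e3 : ((p - j.val - 1 : ℕ) : k) = -(j.val : k) - 1 := by
            rw [show p - j.val - 1 = p - (j.val + 1) by omega, cast_psub hp hp2 _ (by omega)]
            push_cast; ring
          rw [e3]
          by_cases hj1 : j.val = 1
          · have hA : (j.val : k) = 1 := by rw [hj1]; norm_num
            rw [if_pos (show p - 1 + j.val - p = 0 by omega),
                Nat.choose_eq_zero_of_lt (show p - 2 < p - j.val by omega)]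
            push_cast
            linear_combination (-(j.val:k)) * e1 - hA
          · have e2 : (-1:k) ^ (j.val + 1) * (-1) ^ (p - j.val) = 1 := by
              rw [← pow_add, show j.val + 1 + (p - j.val) = p + 1 by omega, pow_succ,
                  (hp.odd_of_ne_two (by omega)).neg_one_pow]
              norm_num
            have e4 : ((p - j.val : ℕ) : k) = -(j.val : k) := cast_psub hp hp2 _ (by omega)
            rw [if_neg (show ¬ (p - 1 + j.val - p = 0) by omega),
                cast_choose_p2 hp (p - j.val) (by omega) hp2, e4]
            linear_combination (-(j.val:k)) * e1 + ((j.val:k) - 1) * e2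
      · -- 1 ≤ i ≤ p - 2, j ≥ 1
        rw [if_neg hip]
        by_cases hjp : j.val = p - 1
        · rw [if_pos hjp, if_pos (Or.inr rfl),
              if_neg (not_or.mpr ⟨(show ¬ (i.val + 1 = 0) by omega), hj0⟩),
              if_neg (not_or.mpr ⟨hi0, hj0⟩)]
          have hipj : ¬ (i.val + j.val < p) := by omega
          rw [if_neg hipj]
          rw [show i.val + 1 - 1 = i.val from rfl, show p - j.val = 1 by omega,
              Nat.choose_one_right, Nat.choose_one_right,
              show j.val + 1 = p by omega, (hp.odd_of_ne_two (by omega)).neg_one_pow,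
              Nat.cast_sub (show 1 ≤ i.val by omega)]
          by_cases hi1 : i.val = 1
          · rw [if_pos (show i.val + j.val - p = 0 by omega), hi1]
            push_cast; ring
          · rw [if_neg (show ¬ (i.val + j.val - p = 0) by omega)]
            push_cast; ring
        · rw [if_neg hjp,
              if_neg (not_or.mpr ⟨(show ¬ (i.val + 1 = 0) by omega), hj0⟩),
              if_neg (not_or.mpr ⟨hi0, (show ¬ (j.val + 1 = 0) by omega)⟩),
              if_neg (not_or.mpr ⟨hi0, hj0⟩)]
          rw [show i.val + 1 - 1 = i.val from rfl,
              show p - (j.val + 1) = p - j.val - 1 by omega]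
          by_cases hz : i.val + j.val = p
          · rw [if_neg (show ¬ (i.val + j.val < p) by omega),
                if_pos (show i.val + j.val - p = 0 by omega)]
            rw [show p - j.val = i.val by omega, Nat.choose_self,
                Nat.choose_self, Nat.choose_eq_zero_of_lt (show i.val - 1 < i.val by omega),
                pow_succ]
            push_cast; ring
          · have hred : (if (if i.val + j.val < p then i.val + j.val else i.val + j.val - p) = 0
                then (2:k) else 1) = 1 := by
              by_cases hsum : i.val + j.val < p
              · rw [if_pos hsum, if_neg (show ¬ (i.val + j.val = 0) by omega)]
              · rw [if_neg hsum, if_neg (show ¬ (i.val + j.val - p = 0) by omega)]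
            rw [hred]
            obtain ⟨m, hm⟩ : ∃ m, i.val = m + 1 := ⟨i.val - 1, by omega⟩
            obtain ⟨n, hn⟩ : ∃ n, p - j.val = n + 1 := ⟨p - j.val - 1, by omega⟩
            rw [hm, hn, show m + 1 - 1 = m from rfl, show n + 1 - 1 = n from rfl,
                Nat.choose_succ_succ m n, pow_succ]
            push_cast; ring
end mulemmas
section mulemmas2
variable [CharP k p] (hp : p.Prime) (hp2 : 2 < p)
include hp hp2

lemma muE (i j : Fin p) :
    (i.val : k) * (1 - (i.val : k)) * mu k (i - 1) j +
      (j.val : k) * (1 - (j.val : k)) * mu k i (j - 1)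
    = eps k (i + j) * mu k i j := by
  have hi := i.isLt; have hj := j.isLt
  simp only [mu, eps, val_sub_one hp2]
  rw [val_add_cast i j]
  by_cases hi0 : i.val = 0
  · have hA : (i.val : k) = 0 := by rw [hi0]; norm_num
    by_cases hj0 : j.val = 0
    · have hB : (j.val : k) = 0 := by rw [hj0]; norm_num
      rw [hA, hB]; ring
    · rw [if_pos (show i.val = 0 ∨ (if j.val = 0 then p - 1 else j.val - 1) = 0 from Or.inl hi0),
          if_pos (show i.val = 0 ∨ j.val = 0 from Or.inl hi0)]
      rw [hA]; ring
  · by_cases hj0 : j.val = 0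
    · have hB : (j.val : k) = 0 := by rw [hj0]; norm_num
      rw [if_pos (show (if i.val = 0 then p - 1 else i.val - 1) = 0 ∨ j.val = 0 from Or.inr hj0),
          if_pos (show i.val = 0 ∨ j.val = 0 from Or.inr hj0)]
      rw [hB]; ring
    · -- i, j ≥ 1
      rw [if_neg hi0, if_neg hj0]
      by_cases hi1 : i.val = 1
      · have hA : (i.val : k) = 1 := by rw [hi1]; norm_num
        by_cases hj1 : j.val = 1
        · rw [if_neg (not_or.mpr ⟨hi0, hj0⟩)]
          have hz : (i.val - 1).choose (p - j.val) = 0 := by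
            rw [hi1]; exact Nat.choose_eq_zero_of_lt (by omega)
          have hB : (j.val : k) = 1 := by rw [hj1]; norm_num
          rw [hz, hA, hB]
          push_cast; ring
        · rw [if_neg (not_or.mpr ⟨hi0, hj0⟩),
              if_neg (not_or.mpr ⟨hi0, (show ¬ (j.val - 1 = 0) by omega)⟩)]
          have hz1 : (i.val - 1).choose (p - j.val) = 0 := by
            rw [hi1]; exact Nat.choose_eq_zero_of_lt (by omega)
          have hz2 : (i.val - 1).choose (p - (j.val - 1)) = 0 := by
            rw [hi1]; exact Nat.choose_eq_zero_of_lt (by omega)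
          rw [hz1, hz2, hA]
          push_cast; ring
      · by_cases hj1 : j.val = 1
        · have hB : (j.val : k) = 1 := by rw [hj1]; norm_num
          rw [if_neg (not_or.mpr ⟨hi0, hj0⟩),
              if_neg (not_or.mpr ⟨(show ¬ (i.val - 1 = 0) by omega), hj0⟩)]
          have hz1 : (i.val - 1).choose (p - j.val) = 0 :=
            Nat.choose_eq_zero_of_lt (by omega)
          have hz2 : (i.val - 1 - 1).choose (p - j.val) = 0 :=
            Nat.choose_eq_zero_of_lt (by omega)
          rw [hz1, hz2, hB]
          push_cast; ring
        · -- i, j ≥ 2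
          rw [if_neg (not_or.mpr ⟨hi0, hj0⟩),
              if_neg (not_or.mpr ⟨(show ¬ (i.val - 1 = 0) by omega), hj0⟩),
              if_neg (not_or.mpr ⟨hi0, (show ¬ (j.val - 1 = 0) by omega)⟩)]
          rw [show i.val - 1 - 1 = i.val - 2 by omega,
              show p - (j.val - 1) = p - j.val + 1 by omega,
              show j.val - 1 + 1 = j.val by omega]
          by_cases hle : i.val + j.val ≤ p
          · have hz1 : (i.val - 2).choose (p - j.val) = 0 :=
              Nat.choose_eq_zero_of_lt (by omega)
            have hz2 : (i.val - 1).choose (p - j.val + 1) = 0 :=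
              Nat.choose_eq_zero_of_lt (by omega)
            have hz3 : (i.val - 1).choose (p - j.val) = 0 :=
              Nat.choose_eq_zero_of_lt (by omega)
            rw [hz1, hz2, hz3]
            push_cast; ring
          · by_cases heq : i.val + j.val = p + 1
            · have hz1 : (i.val - 2).choose (p - j.val) = 0 :=
                Nat.choose_eq_zero_of_lt (by omega)
              have hz2 : (i.val - 1).choose (p - j.val + 1) = 0 :=
                Nat.choose_eq_zero_of_lt (by omega)
              rw [hz1, hz2]
              have hS : (i.val : k) + (j.val : k) = 1 := by
                have h5 : ((i.val + j.val : ℕ) : k) = ((p + 1 : ℕ) : k) := by rw [heq]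
                push_cast [CharP.cast_eq_zero k p] at h5
                linear_combination h5
              push_cast
              linear_combination (((i.val:k) + (j.val:k)) *
                ((-1:k)^(j.val+1) * (((i.val - 1).choose (p - j.val) : ℕ) : k))) * hS
            · -- i + j ≥ p + 2
              have c1 : ((i.val - 1 : ℕ) : k) = (i.val : k) - 1 := by
                rw [Nat.cast_sub (by omega)]; norm_num
              have cN : ((p - j.val : ℕ) : k) = -(j.val : k) := cast_psub hp hp2 _ (by omega)
              have cD : ((i.val - 1 - (p - j.val) : ℕ) : k)
                  = (i.val : k) - 1 + (j.val : k) := by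
                rw [Nat.cast_sub (by omega), c1, cN]; ring
              have hA' : (((i.val - 2).choose (p - j.val) : ℕ) : k) * ((i.val : k) - 1)
                  = (((i.val - 1).choose (p - j.val) : ℕ) : k)
                    * ((i.val : k) - 1 + (j.val : k)) := by
                have h := Nat.choose_mul_succ_eq (i.val - 2) (p - j.val)
                rw [show i.val - 2 + 1 = i.val - 1 by omega] at h
                calc (((i.val - 2).choose (p - j.val) : ℕ) : k) * ((i.val : k) - 1)
                    = (((i.val - 2).choose (p - j.val) * (i.val - 1) : ℕ) : k) := by
                      push_cast [c1]; ring
                  _ = (((i.val - 1).choose (p - j.val) * (i.val - 1 - (p - j.val)) : ℕ) : k) := by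
                      rw [h]
                  _ = _ := by push_cast [cD]; ring
              have hB' : (((i.val - 1).choose (p - j.val + 1) : ℕ) : k) * (1 - (j.val : k))
                  = (((i.val - 1).choose (p - j.val) : ℕ) : k)
                    * ((i.val : k) - 1 + (j.val : k)) := by
                have h := Nat.choose_succ_right_eq (i.val - 1) (p - j.val)
                calc (((i.val - 1).choose (p - j.val + 1) : ℕ) : k) * (1 - (j.val : k))
                    = (((i.val - 1).choose (p - j.val + 1) * (p - j.val + 1) : ℕ) : k) := by
                      push_cast [cN]; ring
                  _ = (((i.val - 1).choose (p - j.val) * (i.val - 1 - (p - j.val)) : ℕ) : k) := by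
                      rw [h]
                  _ = _ := by push_cast [cD]; ring
              rw [pow_succ]
              linear_combination ((-1:k)^j.val * (i.val : k)) * hA'
                + ((-1:k)^j.val * (j.val : k)) * hB'
end mulemmas2
section tracelemmas
variable [CharP k p] (hp : p.Prime) (hp2 : 2 < p)
include hp hp2

lemma trR (j : Fin p) : ∑ i : Fin p, mu k j i * nu k (j + i) j = (-1 : k) := by
  have hjlt := j.isLt
  by_cases hj0 : j.val = 0
  · have hjz : j = 0 := Fin.ext (by simpa using hj0)
    subst hjz
    have hterm : ∀ i : Fin p, mu k 0 i * nu k (0 + i) 0 = (1:k) - (if i = 0 then 1 else 0) := by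
      intro i
      rw [zero_add, mu, if_pos (Or.inl (Fin.val_zero p)), one_mul, nu]
      by_cases hi0 : i.val = 0
      · rw [if_pos hi0, if_pos (Fin.val_zero p), if_pos (Fin.ext (by simpa using hi0))]
        norm_num
      · rw [if_neg hi0, if_pos (Fin.val_zero p),
            if_neg (show ¬ i = 0 from fun h => hi0 (by simp [h]))]
        simp [Fin.val_zero]
    rw [Finset.sum_congr rfl (fun i _ => hterm i), Finset.sum_sub_distrib,
        Finset.sum_const, Finset.sum_ite_eq' Finset.univ (0 : Fin p) (fun _ => (1:k))]
    simp [Finset.card_univ, CharP.cast_eq_zero k p]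
  · rw [Finset.sum_eq_single (0 : Fin p)]
    · rw [add_zero, mu, if_pos (Or.inr (Fin.val_zero p)), one_mul, nu,
          if_neg hj0, if_neg hj0,
          Nat.choose_eq_zero_of_lt (show j.val - 1 < j.val by omega), Nat.choose_self]
      norm_num
    · intro i _ hi
      have hi0 : i.val ≠ 0 := fun h => hi (Fin.ext (by simpa using h))
      have hilt := i.isLt
      by_cases hle : j.val + i.val ≤ p
      · have hmu : mu k j i = 0 := by
          rw [mu, if_neg (not_or.mpr ⟨hj0, hi0⟩),
              Nat.choose_eq_zero_of_lt (show j.val - 1 < p - i.val by omega)]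
          norm_num
        rw [hmu, zero_mul]
      · have hnu : nu k (j + i) j = 0 := by
          simp only [nu, val_add hp2]
          rw [if_neg (show ¬ (j.val + i.val < p) by omega),
              if_neg (show ¬ (j.val + i.val - p = 0) by omega), if_neg hj0,
              Nat.choose_eq_zero_of_lt (show j.val + i.val - p - 1 < j.val by omega),
              Nat.choose_eq_zero_of_lt (show j.val + i.val - p - 1 < j.val - 1 by omega)]
          norm_num
        rw [hnu, mul_zero]
    · exact fun h => absurd (Finset.mem_univ _) h

lemma trL (j : Fin p) : ∑ i : Fin p, mu k i j * nu k (i + j) i = (1 : k) := by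
  have hjlt := j.isLt
  by_cases hj0 : j.val = 0
  · have hjz : j = 0 := Fin.ext (by simpa using hj0)
    subst hjz
    have hterm : ∀ i : Fin p, mu k i 0 * nu k (i + 0) i = -(1:k) + (if i = 0 then 1 else 0) := by
      intro i
      rw [add_zero, mu, if_pos (Or.inr (Fin.val_zero p)), one_mul, nu]
      by_cases hi0 : i.val = 0
      · rw [if_pos hi0, if_pos hi0, if_pos (Fin.ext (by simpa using hi0))]
        norm_num
      · rw [if_neg hi0, if_neg hi0,
            Nat.choose_eq_zero_of_lt (show i.val - 1 < i.val by omega), Nat.choose_self,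
            if_neg (show ¬ i = 0 from fun h => hi0 (by simp [h]))]
        norm_num
    rw [Finset.sum_congr rfl (fun i _ => hterm i), Finset.sum_add_distrib,
        Finset.sum_const, Finset.sum_ite_eq' Finset.univ (0 : Fin p) (fun _ => (1:k))]
    simp [Finset.card_univ, CharP.cast_eq_zero k p]
  · rw [Finset.sum_eq_single (0 : Fin p)]
    · rw [zero_add, mu, if_pos (Or.inl (Fin.val_zero p)), one_mul, nu,
          if_neg hj0, if_pos (Fin.val_zero p)]
      simp [Fin.val_zero]
    · intro i _ hi
      have hi0 : i.val ≠ 0 := fun h => hi (Fin.ext (by simpa using h))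
      have hilt := i.isLt
      by_cases hle : i.val + j.val ≤ p
      · have hmu : mu k i j = 0 := by
          rw [mu, if_neg (not_or.mpr ⟨hi0, hj0⟩),
              Nat.choose_eq_zero_of_lt (show i.val - 1 < p - j.val by omega)]
          norm_num
        rw [hmu, zero_mul]
      · have hnu : nu k (i + j) i = 0 := by
          simp only [nu, val_add hp2]
          rw [if_neg (show ¬ (i.val + j.val < p) by omega),
              if_neg (show ¬ (i.val + j.val - p = 0) by omega), if_neg hi0,
              Nat.choose_eq_zero_of_lt (show i.val + j.val - p - 1 < i.val by omega),
              Nat.choose_eq_zero_of_lt (show i.val + j.val - p - 1 < i.val - 1 by omega)]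
          norm_num
        rw [hnu, mul_zero]
    · exact fun h => absurd (Finset.mem_univ _) h

end tracelemmas
section structural
variable [CharP k p] (hp : p.Prime) (hp2 : 2 < p)

noncomputable def U (k : Type*) [Field k] {p : ℕ} [NeZero p] (s : Fin p) :
    (Fin p → k) ⊗[k] (Fin p → k) :=
  ∑ a : Fin p, nu k s a • (ee k a ⊗ₜ[k] ee k (s - a))

lemma tAct_tmul (X : (Fin p → k) →ₗ[k] (Fin p → k)) (x y : Fin p → k) :
    tAct X (x ⊗ₜ[k] y) = X x ⊗ₜ[k] y + x ⊗ₜ[k] X y := by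
  simp [tAct]

include hp2 in
lemma tHU (s : Fin p) : tAct (Hact p k) (U k s) = ((-2 : k) * (s.val : k)) • U k s := by
  rw [U, map_sum, Finset.smul_sum]
  refine Finset.sum_congr rfl fun a _ => ?_
  rw [map_smul, tAct_tmul, Hact_ee, Hact_ee, ← smul_tmul', tmul_smul, ← add_smul,
      smul_smul, smul_smul]
  congr 1
  rw [val_sub_cast]
  ring

include hp hp2 in
lemma tFU (s : Fin p) : tAct (Fact' p k) (U k s) = cc k s • U k (s + 1) := by
  rw [U, U, map_sum, Finset.smul_sum]
  have step1 : ∀ a : Fin p, tAct (Fact' p k) (nu k s a • (ee k a ⊗ₜ[k] ee k (s - a)))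
      = nu k s a • ((ee k (a + 1)) ⊗ₜ[k] ee k (s - a))
        + nu k s a • (ee k a ⊗ₜ[k] ee k (s + 1 - a)) := by
    intro a
    rw [map_smul, tAct_tmul, Fact'_ee, Fact'_ee, smul_add,
        show s - a + 1 = s + 1 - a by ring]
  rw [Finset.sum_congr rfl fun a _ => step1 a, Finset.sum_add_distrib]
  have reindex : ∑ a : Fin p, nu k s a • ((ee k (a + 1)) ⊗ₜ[k] ee k (s - a))
      = ∑ a : Fin p, nu k s (a - 1) • (ee k a ⊗ₜ[k] ee k (s + 1 - a)) := by
    refine Fintype.sum_equiv (Equiv.addRight (1 : Fin p)) _ _ fun a => ?_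
    simp only [Equiv.coe_addRight]
    rw [show a + 1 - 1 = a by ring, show s + 1 - (a + 1) = s - a by ring]
  rw [reindex, ← Finset.sum_add_distrib]
  refine Finset.sum_congr rfl fun a _ => ?_
  rw [← add_smul, nuF hp hp2 s a, mul_smul]

include hp hp2 in
lemma tEU (s : Fin p) : tAct (Eact p k) (U k s) = eps k s • U k (s - 1) := by
  rw [U, U, map_sum, Finset.smul_sum]
  have step1 : ∀ a : Fin p, tAct (Eact p k) (nu k s a • (ee k a ⊗ₜ[k] ee k (s - a)))
      = (nu k s a * ((a.val : k) * (1 - (a.val : k))))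
          • (ee k (a - 1) ⊗ₜ[k] ee k (s - a))
        + (nu k s a * ((((s - a : Fin p) : ℕ) : k) * (1 - (((s - a : Fin p) : ℕ) : k))))
          • (ee k a ⊗ₜ[k] ee k (s - 1 - a)) := by
    intro a
    rw [map_smul, tAct_tmul, Eact_ee, Eact_ee, smul_add, ← smul_tmul', tmul_smul,
        smul_smul, smul_smul, show s - a - 1 = s - 1 - a by ring]
  rw [Finset.sum_congr rfl fun a _ => step1 a, Finset.sum_add_distrib]
  have reindex : ∑ a : Fin p,
        (nu k s a * ((a.val : k) * (1 - (a.val : k))))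
          • (ee k (a - 1) ⊗ₜ[k] ee k (s - a))
      = ∑ a : Fin p,
        (nu k s (a + 1) * ((((a + 1 : Fin p) : ℕ) : k) * (1 - (((a + 1 : Fin p) : ℕ) : k))))
          • (ee k a ⊗ₜ[k] ee k (s - 1 - a)) := by
    refine Fintype.sum_equiv (Equiv.subRight (1 : Fin p)) _ _ fun a => ?_
    simp only [Equiv.subRight_apply]
    rw [show a - 1 + 1 = a by ring, show s - 1 - (a - 1) = s - a by ring]
  rw [reindex, ← Finset.sum_add_distrib]
  refine Finset.sum_congr rfl fun a _ => ?_
  rw [← add_smul, smul_smul]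
  congr 1
  have h1 : (((a + 1 : Fin p) : ℕ) : k) = (a.val : k) + 1 := by
    rw [val_add_cast, val_one_cast hp2]
  have h2 : (((s - a : Fin p) : ℕ) : k) = (s.val : k) - (a.val : k) := val_sub_cast s a
  rw [h1, h2, ← nuE hp hp2 s a]
  ring

include hp hp2 in
lemma commU (s : Fin p) :
    TensorProduct.comm k (Fin p → k) (Fin p → k) (U k s) = - U k s := by
  rw [U, map_sum]
  have step : ∀ a : Fin p,
      TensorProduct.comm k (Fin p → k) (Fin p → k) (nu k s a • (ee k a ⊗ₜ[k] ee k (s - a)))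
      = nu k s a • (ee k (s - a) ⊗ₜ[k] ee k a) := by
    intro a; rw [map_smul, TensorProduct.comm_tmul]
  rw [Finset.sum_congr rfl fun a _ => step a]
  have reindex : ∑ a : Fin p, nu k s a • (ee k (s - a) ⊗ₜ[k] ee k a)
      = ∑ a : Fin p, nu k s (s - a) • (ee k a ⊗ₜ[k] ee k (s - a)) := by
    have hinv : Function.Involutive (fun a : Fin p => s - a) := fun a => by ring
    refine Fintype.sum_equiv hinv.toPerm _ _ fun a => ?_
    simp only [Function.Involutive.coe_toPerm]
    rw [show s - (s - a) = a by ring]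
  rw [reindex, ← Finset.sum_neg_distrib]
  refine Finset.sum_congr rfl fun a _ => ?_
  rw [nuAnti hp hp2 s a]
  exact neg_smul (nu k s a) (ee k a ⊗ₜ[k] ee k (s - a))

end structural
section final
variable [CharP k p] (hp : p.Prime) (hp2 : 2 < p)

noncomputable def BB (k : Type*) [Field k] (p : ℕ) [NeZero p] :
    Module.Basis (Fin p × Fin p) k ((Fin p → k) ⊗[k] (Fin p → k)) :=
  Module.Basis.tensorProduct (Pi.basisFun k (Fin p)) (Pi.basisFun k (Fin p))

noncomputable def ff (k : Type*) [Field k] (p : ℕ) [NeZero p] :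
    (Fin p → k) ⊗[k] (Fin p → k) →ₗ[k] (Fin p → k) ⊗[k] (Fin p → k) :=
  (BB k p).constr k fun q => mu k q.1 q.2 • U k (q.1 + q.2)

lemma BB_apply (i j : Fin p) : BB k p (i, j) = ee k i ⊗ₜ[k] ee k j := by
  rw [BB, Module.Basis.tensorProduct_apply, basisFun_eq_ee, basisFun_eq_ee]

lemma ff_apply (i j : Fin p) :
    ff k p (ee k i ⊗ₜ[k] ee k j) = mu k i j • U k (i + j) := by
  rw [← BB_apply, ff, Module.Basis.constr_basis]

include hp hp2 in
lemma ff_commH : ff k p ∘ₗ tAct (Hact p k) = tAct (Hact p k) ∘ₗ ff k p := by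
  refine Module.Basis.ext (BB k p) fun q => ?_
  obtain ⟨i, j⟩ := q
  rw [BB_apply]
  simp only [LinearMap.comp_apply]
  have lhs : ff k p (tAct (Hact p k) (ee k i ⊗ₜ[k] ee k j))
      = ((-2:k) * (i.val : k)) • (mu k i j • U k (i + j))
        + ((-2:k) * (j.val : k)) • (mu k i j • U k (i + j)) := by
    rw [tAct_tmul, Hact_ee, Hact_ee, ← smul_tmul', tmul_smul, map_add, map_smul, map_smul,
        ff_apply]
  have rhs : tAct (Hact p k) (ff k p (ee k i ⊗ₜ[k] ee k j))
      = mu k i j • (((-2:k) * (((i + j : Fin p) : ℕ) : k)) • U k (i + j)) := by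
    rw [ff_apply, map_smul, tHU hp2]
  rw [lhs, rhs, smul_smul, smul_smul, smul_smul, ← add_smul]
  congr 1
  rw [val_add_cast]
  ring

include hp hp2 in
lemma ff_commF : ff k p ∘ₗ tAct (Fact' p k) = tAct (Fact' p k) ∘ₗ ff k p := by
  refine Module.Basis.ext (BB k p) fun q => ?_
  obtain ⟨i, j⟩ := q
  rw [BB_apply]
  simp only [LinearMap.comp_apply]
  have lhs : ff k p (tAct (Fact' p k) (ee k i ⊗ₜ[k] ee k j))
      = mu k (i + 1) j • U k (i + j + 1) + mu k i (j + 1) • U k (i + j + 1) := by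
    rw [tAct_tmul, Fact'_ee, Fact'_ee, map_add, ff_apply, ff_apply,
        show i + 1 + j = i + j + 1 by ring, show i + (j + 1) = i + j + 1 by ring]
  have rhs : tAct (Fact' p k) (ff k p (ee k i ⊗ₜ[k] ee k j))
      = mu k i j • (cc k (i + j) • U k (i + j + 1)) := by
    rw [ff_apply, map_smul, tFU hp hp2]
  rw [lhs, rhs, ← add_smul, muF hp hp2 i j, smul_smul, mul_comm]

include hp hp2 in
lemma ff_commE : ff k p ∘ₗ tAct (Eact p k) = tAct (Eact p k) ∘ₗ ff k p := by
  refine Module.Basis.ext (BB k p) fun q => ?_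
  obtain ⟨i, j⟩ := q
  rw [BB_apply]
  simp only [LinearMap.comp_apply]
  have lhs : ff k p (tAct (Eact p k) (ee k i ⊗ₜ[k] ee k j))
      = ((i.val : k) * (1 - (i.val : k))) • (mu k (i - 1) j • U k (i + j - 1))
        + ((j.val : k) * (1 - (j.val : k))) • (mu k i (j - 1) • U k (i + j - 1)) := by
    rw [tAct_tmul, Eact_ee, Eact_ee, ← smul_tmul', tmul_smul, map_add, map_smul, map_smul,
        ff_apply, ff_apply,
        show i - 1 + j = i + j - 1 by ring, show i + (j - 1) = i + j - 1 by ring]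
  have rhs : tAct (Eact p k) (ff k p (ee k i ⊗ₜ[k] ee k j))
      = mu k i j • (eps k (i + j) • U k (i + j - 1)) := by
    rw [ff_apply, map_smul, tEU hp hp2]
  rw [lhs, rhs, smul_smul, smul_smul, smul_smul, ← add_smul, muE hp hp2 i j, mul_comm]

include hp hp2 in
lemma ff_anti (x : (Fin p → k) ⊗[k] (Fin p → k)) :
    TensorProduct.comm k (Fin p → k) (Fin p → k) (ff k p x) = - ff k p x := by
  have heq : (TensorProduct.comm k (Fin p → k) (Fin p → k)).toLinearMap ∘ₗ ff k p
      = - ff k p := by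
    refine Module.Basis.ext (BB k p) fun q => ?_
    obtain ⟨i, j⟩ := q
    rw [BB_apply]
    simp only [LinearMap.comp_apply, LinearMap.neg_apply, LinearEquiv.coe_coe]
    rw [ff_apply, map_smul, commU hp hp2, smul_neg]
  have h2 := LinearMap.congr_fun heq x
  simpa using h2

lemma coord_ee (i b' : Fin p) :
    (Pi.basisFun k (Fin p)).coord i (ee k b') = if b' = i then (1:k) else 0 := by
  rw [← basisFun_eq_ee, Module.Basis.coord_apply, Module.Basis.repr_self, Finsupp.single_apply]

include hp hp2 in
lemma ptrR_ff : ptrR (Pi.basisFun k (Fin p)) (ff k p) = - LinearMap.id := by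
  refine Module.Basis.ext (Pi.basisFun k (Fin p)) fun j => ?_
  rw [ptrR, basisFun_eq_ee]
  rw [LinearMap.sum_apply]
  have hterm : ∀ i : Fin p,
      ((TensorProduct.rid k (Fin p → k)).toLinearMap
        ∘ₗ (TensorProduct.map LinearMap.id ((Pi.basisFun k (Fin p)).coord i))
        ∘ₗ ff k p ∘ₗ ((TensorProduct.mk k (Fin p → k) (Fin p → k)).flip
            ((Pi.basisFun k (Fin p)) i))) (ee k j)
      = (mu k j i * nu k (j + i) j) • ee k j := by
    intro i
    simp only [LinearMap.comp_apply, LinearMap.flip_apply, TensorProduct.mk_apply,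
      basisFun_eq_ee]
    rw [ff_apply, map_smul, map_smul, U, map_sum, map_sum]
    rw [Finset.sum_congr rfl (fun a _ => by
      simp only [map_smul, TensorProduct.map_tmul, LinearMap.id_apply, coord_ee,
        LinearEquiv.coe_coe, TensorProduct.rid_tmul] :
      ∀ a ∈ Finset.univ, _ = (nu k (j + i) a • ((if j + i - a = i then (1:k) else 0) • ee k a)))]
    rw [Finset.sum_eq_single j]
    · rw [if_pos (by ring : j + i - j = i)]
      rw [smul_smul, smul_smul, mul_one]
    · intro b _ hb
      rw [if_neg (fun h => hb (by linear_combination (norm := ring_nf) -h : b = j)),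
          zero_smul, smul_zero]
    · exact fun h => absurd (Finset.mem_univ _) h
  rw [Finset.sum_congr rfl fun i _ => hterm i, ← Finset.sum_smul, trR hp hp2 j]
  simp

include hp hp2 in
lemma ptrL_ff : ptrL (Pi.basisFun k (Fin p)) (ff k p) = LinearMap.id := by
  refine Module.Basis.ext (Pi.basisFun k (Fin p)) fun j => ?_
  rw [ptrL, basisFun_eq_ee]
  rw [LinearMap.sum_apply]
  have hterm : ∀ i : Fin p,
      ((TensorProduct.lid k (Fin p → k)).toLinearMap
        ∘ₗ (TensorProduct.map ((Pi.basisFun k (Fin p)).coord i) LinearMap.id)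
        ∘ₗ ff k p ∘ₗ (TensorProduct.mk k (Fin p → k) (Fin p → k)
            ((Pi.basisFun k (Fin p)) i))) (ee k j)
      = (mu k i j * nu k (i + j) i) • ee k ((i + j) - i) := by
    intro i
    simp only [LinearMap.comp_apply, TensorProduct.mk_apply, basisFun_eq_ee]
    rw [ff_apply, map_smul, map_smul, U, map_sum, map_sum]
    rw [Finset.sum_congr rfl (fun a _ => by
      simp only [map_smul, TensorProduct.map_tmul, LinearMap.id_apply, coord_ee,
        LinearEquiv.coe_coe, TensorProduct.lid_tmul] :
      ∀ a ∈ Finset.univ, _ = (nu k (i + j) a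
        • (((if a = i then (1:k) else 0)) • ee k ((i + j) - a))))]
    rw [Finset.sum_eq_single i]
    · rw [if_pos rfl]
      rw [smul_smul, smul_smul, mul_one]
    · intro b _ hb
      rw [if_neg hb, zero_smul, smul_zero]
    · exact fun h => absurd (Finset.mem_univ _) h
  rw [Finset.sum_congr rfl fun i _ => hterm i]
  have : ∀ i : Fin p, (mu k i j * nu k (i + j) i) • ee k ((i + j) - i)
      = (mu k i j * nu k (i + j) i) • ee k j := by
    intro i; rw [show i + j - i = j by ring]
  rw [Finset.sum_congr rfl fun i _ => this i, ← Finset.sum_smul, trL hp hp2 j]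
  simp

end final
end Stmt19


/-- Let `χ` be the regular nilpotent character and `V = V_{χ,0}` the simple
`sl₂(k)`-module with basis `v₀, …, v_{p-1}`, `H⬝vᵢ = -2i⬝vᵢ`, `F⬝vᵢ = v_{i+1}`,
`E⬝vᵢ = i(1-i)⬝v_{i-1}`.  Then `V` is not ambidextrous: there is an
`sl₂(k)`-endomorphism `f` of `V ⊗ V` mapping the symmetric part `S²V` into the
exterior part `Λ²V` with `tr_R(f) = -id_V ≠ 0` and `tr_R(f) = -tr_L(f)`; hence
the canonical trace on `End(V)` fails to be ambidextrous. -/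
theorem stmt19 (p : ℕ) (hp : p.Prime) (hp2 : 2 < p) [NeZero p]
    (k : Type*) [Field k] [IsAlgClosed k] [CharP k p] :
    ∃ f : (Fin p → k) ⊗[k] (Fin p → k) →ₗ[k] (Fin p → k) ⊗[k] (Fin p → k),
      (f ∘ₗ tAct (Hact p k) = tAct (Hact p k) ∘ₗ f) ∧
      (f ∘ₗ tAct (Eact p k) = tAct (Eact p k) ∘ₗ f) ∧
      (f ∘ₗ tAct (Fact' p k) = tAct (Fact' p k) ∘ₗ f) ∧
      (∀ x : (Fin p → k) ⊗[k] (Fin p → k),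
        TensorProduct.comm k (Fin p → k) (Fin p → k) x = x →
        TensorProduct.comm k (Fin p → k) (Fin p → k) (f x) = - f x) ∧
      ptrR (Pi.basisFun k (Fin p)) f = - LinearMap.id ∧
      ptrR (Pi.basisFun k (Fin p)) f = - ptrL (Pi.basisFun k (Fin p)) f ∧
      ptrR (Pi.basisFun k (Fin p)) f ≠ 0 := by
  refine ⟨Stmt19.ff k p, Stmt19.ff_commH hp hp2, Stmt19.ff_commE hp hp2,
    Stmt19.ff_commF hp hp2, fun x _ => Stmt19.ff_anti hp hp2 x, Stmt19.ptrR_ff hp hp2, ?_, ?_⟩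
  · rw [Stmt19.ptrR_ff hp hp2, Stmt19.ptrL_ff hp hp2]
  · rw [Stmt19.ptrR_ff hp hp2]
    intro h
    have h0 : (- LinearMap.id : (Fin p → k) →ₗ[k] (Fin p → k)) (Stmt19.ee k 0)
        = (0 : (Fin p → k) →ₗ[k] (Fin p → k)) (Stmt19.ee k 0) := by rw [h]
    simp only [LinearMap.neg_apply, LinearMap.id_apply, LinearMap.zero_apply,
      neg_eq_zero] at h0
    have : (Stmt19.ee k (0 : Fin p)) 0 = 0 := by rw [h0]; rfl
    rw [Stmt19.ee, Pi.single_eq_same] at this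
    exact one_ne_zero this
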